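/- Let I be an index set and n : I → ℕ a family of positive integers; write 𝒜 = ⊕_{ι∈I} M_{n_ι}(ℂ) for the direct sum, sitting as a two-sided ideal inside the product Π_{ι∈I} M_{n_ι}(ℂ). Let f₁, …, f_k be linear functionals on 𝒜 and a₁, …, a_k, b₁, …, b_k ∈ 𝒜. If Σ_{i=1}^{k} f_i(a_i c b_i) = 0 for all c ∈ 𝒜, then Σ_{i=1}^{k} f_i(a_i m b_i) = 0 for all m ∈ Π_{ι∈I} M_{n_ι}(ℂ) (note that a_i m b_i ∈ 𝒜 since a_i has finite support). Consequently, every reduced functional on 𝒜 extends in a well-defined way to the product algebra by the formula (a f b)(m) = f(b m a). -/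
import Mathlib


/-- The product algebra `Π ι, M_{n ι}(ℂ)`. -/
abbrev FullProd (I : Type*) (n : I → ℕ) : Type _ :=
  ∀ ι : I, Matrix (Fin (n ι)) (Fin (n ι)) ℂ

/-- The algebraic direct sum `⊕ ι, M_{n ι}(ℂ)`, realized as the set of finitely supported
elements of the product; it is a non-unital subalgebra (in fact a two-sided ideal) of the
product, and the product realizes its multiplier algebra. -/
noncomputable def FinSupp (I : Type*) (n : I → ℕ) : NonUnitalSubalgebra ℂ (FullProd I n) where
  carrier := {x | {ι | x ι ≠ 0}.Finite}
  add_mem' := by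
    intro a b ha hb
    refine (ha.union hb).subset fun ι h => ?_
    simp only [Set.mem_setOf_eq, Set.mem_union, Pi.add_apply] at h ⊢
    by_contra hc
    push_neg at hc
    exact h (by rw [hc.1, hc.2, add_zero])
  zero_mem' := by
    simp only [Set.mem_setOf_eq, Pi.zero_apply, ne_eq, not_true_eq_false]
    simp
  mul_mem' := by
    intro a b ha hb
    refine ha.subset fun ι h => ?_
    simp only [Set.mem_setOf_eq, Pi.mul_apply] at h ⊢
    intro h0; exact h (by rw [h0, zero_mul])
  smul_mem' := by
    intro c x hx
    refine hx.subset fun ι h => ?_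
    simp only [Set.mem_setOf_eq, Pi.smul_apply] at h ⊢
    intro h0; exact h (by rw [h0, smul_zero])

/-- For `a, b` in the direct sum and `x` in the product, `a * x * b` lies in the direct sum:
this realizes the evaluation of reduced functionals on multipliers. -/
noncomputable def sandwich {I : Type*} {n : I → ℕ} (a : FinSupp I n) (x : FullProd I n)
    (b : FinSupp I n) : FinSupp I n :=
  ⟨(a : FullProd I n) * x * (b : FullProd I n), by
    have ha : {ι | (a : FullProd I n) ι ≠ 0}.Finite := a.2
    refine ha.subset fun ι h => ?_
    simp only [Set.mem_setOf_eq, Pi.mul_apply] at h ⊢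
    intro h0; exact h (by rw [h0, zero_mul, zero_mul])⟩

/-- The central idempotent `e_F` supported on a finite set `F`, an element of the direct sum. -/
noncomputable def unitF {I : Type*} [DecidableEq I] (n : I → ℕ) (F : Finset I) : FinSupp I n :=
  ⟨fun ι => if ι ∈ F then 1 else 0, by
    show {ι | (if ι ∈ F then (1 : Matrix (Fin (n ι)) (Fin (n ι)) ℂ) else 0) ≠ 0}.Finite
    refine F.finite_toSet.subset fun ι h => ?_
    simp only [Set.mem_setOf_eq] at h
    by_contra hF
    exact h (if_neg hF)⟩


/-- Let `𝒜 = ⊕ ι, M_{n ι}(ℂ)` sit as an ideal inside `Π ι, M_{n ι}(ℂ)`.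
If linear functionals `f i` on `𝒜` and elements `a i, b i ∈ 𝒜` satisfy
`∑ i, f i (a i * c * b i) = 0` for all `c ∈ 𝒜`, then `∑ i, f i (a i * m * b i) = 0` for every
element `m` of the product (note `a i * m * b i ∈ 𝒜`).  Hence every reduced functional on `𝒜`
extends in a well-defined way to the product algebra. -/
theorem bohr_stmt2 {I : Type*} (n : I → ℕ) (hn : ∀ ι, 0 < n ι) (k : ℕ)
    (f : Fin k → (FinSupp I n →ₗ[ℂ] ℂ)) (a b : Fin k → FinSupp I n)
    (h : ∀ c : FinSupp I n, ∑ i, f i (sandwich (a i) (c : FullProd I n) (b i)) = 0) :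
    ∀ m : FullProd I n, ∑ i, f i (sandwich (a i) m (b i)) = 0 := by

  intro m
  classical
  have hF : (⋃ i, {ι | (a i : FullProd I n) ι ≠ 0}).Finite :=
    Set.finite_iUnion fun i => (a i).2
  set F : Finset I := hF.toFinset with hFdef
  have hmem : ∀ i ι, (a i : FullProd I n) ι ≠ 0 → ι ∈ F := by
    intro i ι hι
    simp only [hFdef, Set.Finite.mem_toFinset, Set.mem_iUnion]
    exact ⟨i, hι⟩
  have hcfin : {ι | (((unitF n F : FinSupp I n) : FullProd I n) * m) ι ≠ 0}.Finite := by
    refine F.finite_toSet.subset fun ι h => ?_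
    simp only [Set.mem_setOf_eq, Pi.mul_apply] at h
    by_contra hι
    apply h
    show (if ι ∈ F then (1 : Matrix (Fin (n ι)) (Fin (n ι)) ℂ) else 0) * m ι = 0
    rw [if_neg (by simpa using hι), zero_mul]
  set c : FinSupp I n := ⟨((unitF n F : FinSupp I n) : FullProd I n) * m, hcfin⟩ with hcdef
  have key : ∀ i, sandwich (a i) (c : FullProd I n) (b i) = sandwich (a i) m (b i) := by
    intro i
    apply Subtype.ext
    funext ι
    show ((a i : FullProd I n) * (c : FullProd I n) * (b i : FullProd I n)) ι
      = ((a i : FullProd I n) * m * (b i : FullProd I n)) ι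
    simp only [Pi.mul_apply, hcdef]
    by_cases hι : ι ∈ F
    · have he : ((unitF n F : FinSupp I n) : FullProd I n) ι = 1 := if_pos hι
      rw [he, one_mul]
    · have ha0 : (a i : FullProd I n) ι = 0 := by
        by_contra h0
        exact hι (hmem i ι h0)
      simp [ha0]
  calc ∑ i, f i (sandwich (a i) m (b i))
      = ∑ i, f i (sandwich (a i) (c : FullProd I n) (b i)) := by
        exact Finset.sum_congr rfl fun i _ => by rw [key i]
    _ = 0 := h c
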